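/- Let n ≥ 1 and h > 0. Define the Beals kernel on (ℂⁿ)³ by K_h^{Beals}(X, Y, Z) = exp( −(1/h) Σ_j (Z_j − Y_j)(conj(Z_j) − conj(X_j)) − (1/(2h)) ‖X − Y‖² ). Then for all X, Y, Z ∈ ℂⁿ, ∫_{ℂⁿ} K_h^{Beals}(X, Y, Z + W) dγ_{h/2}(W) = 2^{−n} exp( (1/(2h))( Σ_j Z_j conj(X_j) + Σ_j X_j conj(Y_j) + Σ_j Y_j conj(Z_j) − Σ_j Z_j conj(Z_j) ) ) · exp( −(‖X‖² + ‖Y‖²)/(2h) ). -/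

import Mathlib

open MeasureTheory ProbabilityTheory Complex

open scoped NNReal ENNReal Real

/-- The Gaussian measure on `ℂ` whose real and imaginary parts are independent
real Gaussians of mean `0` and variance `t`. -/
noncomputable def gaussC (t : ℝ) : Measure ℂ :=
  ((gaussianReal 0 t.toNNReal).prod (gaussianReal 0 t.toNNReal)).map
    (fun p => (p.1 : ℂ) + (p.2 : ℂ) * Complex.I)

/-- The Gaussian measure `γ_t` on `ℂⁿ`. -/
noncomputable def gaussCn (n : ℕ) (t : ℝ) : Measure (Fin n → ℂ) :=
  Measure.pi fun _ => gaussC t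

/-- The Beals kernel
`K_h^{Beals}(X,Y,Z) = exp( −(1/h) Σ_j (Z_j−Y_j)(conj Z_j − conj X_j) − (1/(2h)) ‖X−Y‖² )`,
where `‖U‖² = Σ_j U_j conj U_j` is the Hermitian norm on `ℂⁿ`. -/
noncomputable def bealsKer (n : ℕ) (h : ℝ) (X Y Z : Fin n → ℂ) : ℂ :=
  Complex.exp (-(1 / (h : ℂ)) * ∑ j, (Z j - Y j) * ((starRingEnd ℂ) (Z j) - (starRingEnd ℂ) (X j))
    - (1 / (2 * (h : ℂ))) * ∑ j, (X j - Y j) * (starRingEnd ℂ) (X j - Y j))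

lemma gauss1 (h : ℝ) (hh : 0 < h) (c d : ℂ) :
    ∫ x : ℝ, Complex.exp (-(1/(h:ℂ)) * x^2 + c * x + d) ∂(gaussianReal 0 (h/2).toNNReal)
      = ((Real.sqrt 2 : ℝ) : ℂ)⁻¹ * Complex.exp (d + c^2 * h / 8) := by
  have hh2 : (0:ℝ) < h/2 := by linarith
  have hv : (h/2).toNNReal ≠ 0 := by
    simp [Real.toNNReal_eq_zero, not_le, hh2]
  have hvc : ((h/2).toNNReal : ℝ) = h/2 := Real.coe_toNNReal _ hh2.le
  have hch : (h:ℂ) ≠ 0 := by exact_mod_cast hh.ne'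
  rw [gaussianReal_of_var_ne_zero 0 hv]
  have hd : gaussianPDF 0 (h/2).toNNReal
      = fun x => ((Real.toNNReal (gaussianPDFReal 0 (h/2).toNNReal x) : ℝ≥0) : ℝ≥0∞) := rfl
  rw [hd, integral_withDensity_eq_integral_smul
    ((measurable_gaussianPDFReal _ _).real_toNNReal) _]
  have hpt : ∀ x : ℝ, (Real.toNNReal (gaussianPDFReal 0 (h/2).toNNReal x) : ℝ≥0)
        • Complex.exp (-(1/(h:ℂ)) * x^2 + c * x + d)
      = ((Real.sqrt (π * h) : ℝ) : ℂ)⁻¹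
          * Complex.exp (((-(2/h) : ℝ) : ℂ) * x^2 + c * x + d) := by
    intro x
    rw [NNReal.smul_def, Real.coe_toNNReal _ (gaussianPDFReal_nonneg _ _ _)]
    rw [gaussianPDFReal, hvc]
    push_cast
    rw [Complex.real_smul]
    push_cast
    rw [show ((2:ℝ) * π * (h/2)) = π * h by ring, mul_assoc, ← Complex.exp_add]
    congr 2
    field_simp
    ring
  simp_rw [hpt]
  rw [integral_const_mul]
  have hb : ((-(2/h) : ℝ) : ℂ).re < 0 := by
    simp only [Complex.ofReal_re, neg_lt_zero]
    positivity
  rw [integral_cexp_quadratic hb c d]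
  have e1 : (↑π / -((-(2/h) : ℝ) : ℂ)) = ((π * h / 2 : ℝ) : ℂ) := by
    push_cast
    field_simp
  have hπh : (0:ℝ) < π * h := by positivity
  have e2 : ((π * h / 2 : ℝ) : ℂ) ^ (1/2 : ℂ) = ((Real.sqrt (π * h / 2) : ℝ) : ℂ) := by
    rw [Real.sqrt_eq_rpow, Complex.ofReal_cpow (by positivity)]
    push_cast
    ring_nf
  rw [e1, e2]
  have e3 : (((Real.sqrt (π * h) : ℝ) : ℂ))⁻¹ * ((Real.sqrt (π * h / 2) : ℝ) : ℂ)
      = ((Real.sqrt 2 : ℝ) : ℂ)⁻¹ := by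
    rw [← Complex.ofReal_inv, ← Complex.ofReal_mul, ← Complex.ofReal_inv]
    congr 1
    rw [Real.sqrt_div hπh.le 2]
    have h1 : Real.sqrt (π * h) ≠ 0 := by positivity
    field_simp
  have e4 : d - c^2 / (4 * ((-(2/h) : ℝ) : ℂ)) = d + c^2 * h / 8 := by
    push_cast
    field_simp
    ring
  rw [← mul_assoc, e3, e4]

lemma gaussC_int (h : ℝ) (hh : 0 < h) (a b c : ℂ) :
    ∫ w, Complex.exp (-(1/(h:ℂ)) * (w * (starRingEnd ℂ) w + a * w + b * (starRingEnd ℂ) w + c))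
        ∂(gaussC (h/2))
      = (1/2 : ℂ) * Complex.exp (-(c/h) + a * b / (2*h)) := by
  have hch : (h:ℂ) ≠ 0 := by exact_mod_cast hh.ne'
  have hm : Measurable (fun p : ℝ × ℝ => (p.1 : ℂ) + (p.2 : ℂ) * Complex.I) := by
    fun_prop
  have hf : AEStronglyMeasurable
      (fun w : ℂ => Complex.exp (-(1/(h:ℂ)) * (w * (starRingEnd ℂ) w + a * w
        + b * (starRingEnd ℂ) w + c)))
      (((gaussianReal 0 (h/2).toNNReal).prod (gaussianReal 0 (h/2).toNNReal)).map
        (fun p => (p.1 : ℂ) + (p.2 : ℂ) * Complex.I)) := by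
    apply Continuous.aestronglyMeasurable
    exact Complex.continuous_exp.comp ((continuous_const.mul
      ((((continuous_id.mul Complex.continuous_conj).add
        (continuous_const.mul continuous_id)).add
        (continuous_const.mul Complex.continuous_conj)).add continuous_const)))
  rw [gaussC, integral_map hm.aemeasurable hf]
  have key : ∀ p : ℝ × ℝ,
      Complex.exp (-(1/(h:ℂ)) * ((((p.1:ℂ) + (p.2:ℂ)*Complex.I))
          * (starRingEnd ℂ) ((p.1:ℂ) + (p.2:ℂ)*Complex.I)
        + a * ((p.1:ℂ) + (p.2:ℂ)*Complex.I)
        + b * (starRingEnd ℂ) ((p.1:ℂ) + (p.2:ℂ)*Complex.I) + c))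
      = Complex.exp (-(1/(h:ℂ)) * (p.1:ℂ)^2 + (-(a+b)/h) * (p.1:ℂ) + 0)
        * Complex.exp (-(1/(h:ℂ)) * (p.2:ℂ)^2
            + (-(a-b)*Complex.I/h) * (p.2:ℂ) + (-(c/h))) := by
    intro p
    rw [← Complex.exp_add]
    congr 1
    have hc : (starRingEnd ℂ) ((p.1:ℂ) + (p.2:ℂ)*Complex.I)
        = (p.1:ℂ) - (p.2:ℂ)*Complex.I := by
      simp [Complex.conj_ofReal]
      ring
    rw [hc]
    field_simp
    ring_nf
    rw [Complex.I_sq]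
    ring
  simp_rw [key]
  rw [integral_prod_mul
    (f := fun u : ℝ => Complex.exp (-(1/(h:ℂ)) * (u:ℂ)^2 + (-(a+b)/h) * (u:ℂ) + 0))
    (g := fun v : ℝ => Complex.exp (-(1/(h:ℂ)) * (v:ℂ)^2
      + (-(a-b)*Complex.I/h) * (v:ℂ) + (-(c/h))))]
  rw [gauss1 h hh _ _, gauss1 h hh _ _]
  rw [mul_mul_mul_comm, ← Complex.exp_add]
  have h2 : (((Real.sqrt 2 : ℝ):ℂ))⁻¹ * ((Real.sqrt 2 : ℝ):ℂ)⁻¹ = (1/2 : ℂ) := by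
    rw [← mul_inv, ← Complex.ofReal_mul, Real.mul_self_sqrt (by norm_num : (0:ℝ) ≤ 2)]
    norm_num
  rw [h2]
  congr 2
  have hI : (-(a-b)*Complex.I/(h:ℂ))^2 = -((a-b)^2/(h:ℂ)^2) := by
    rw [div_pow, mul_pow, Complex.I_sq]; ring
  rw [hI]
  field_simp
  ring_nf

lemma coord (h : ℝ) (hh : 0 < h) (x y z : ℂ) :
    ∫ w, Complex.exp (-(1/(h:ℂ)) * ((z + w - y)
        * ((starRingEnd ℂ) z + (starRingEnd ℂ) w - (starRingEnd ℂ) x))) ∂(gaussC (h/2))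
      = (1/2 : ℂ) * Complex.exp (-(1/(2*(h:ℂ)))
          * ((z - y) * ((starRingEnd ℂ) z - (starRingEnd ℂ) x))) := by
  have hch : (h:ℂ) ≠ 0 := by exact_mod_cast hh.ne'
  have e : ∀ w : ℂ, -(1/(h:ℂ)) * ((z + w - y)
        * ((starRingEnd ℂ) z + (starRingEnd ℂ) w - (starRingEnd ℂ) x))
      = -(1/(h:ℂ)) * (w * (starRingEnd ℂ) w
        + ((starRingEnd ℂ) z - (starRingEnd ℂ) x) * w + (z - y) * (starRingEnd ℂ) w
        + (z - y) * ((starRingEnd ℂ) z - (starRingEnd ℂ) x)) := by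
    intro w; ring
  simp_rw [e]
  rw [gaussC_int h hh _ _ _]
  congr 2
  rw [mul_comm ((starRingEnd ℂ) z - (starRingEnd ℂ) x) (z - y)]
  generalize (z - y) * ((starRingEnd ℂ) z - (starRingEnd ℂ) x) = C
  field_simp
  ring

instance gaussC_prob (t : ℝ) : IsProbabilityMeasure (gaussC t) := by
  rw [gaussC]
  exact Measure.isProbabilityMeasure_map (by fun_prop)

/-- Action of the heat operator of variance `h/2` (in the `Z` variable)
on the Beals kernel. -/
theorem heat_on_beals_kernel
    (n : ℕ) (hn : 1 ≤ n) (h : ℝ) (hh : 0 < h) (X Y Z : Fin n → ℂ) :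
    ∫ W, bealsKer n h X Y (Z + W) ∂(gaussCn n (h / 2))
      = (2 : ℂ) ^ (-(n : ℤ)) *
          Complex.exp ((1 / (2 * (h : ℂ))) *
            (∑ j, Z j * (starRingEnd ℂ) (X j) + ∑ j, X j * (starRingEnd ℂ) (Y j)
              + ∑ j, Y j * (starRingEnd ℂ) (Z j) - ∑ j, Z j * (starRingEnd ℂ) (Z j))) *
          Complex.exp (-((∑ j, X j * (starRingEnd ℂ) (X j))
              + ∑ j, Y j * (starRingEnd ℂ) (Y j)) / (2 * (h : ℂ))) := by
  have hch : (h:ℂ) ≠ 0 := by exact_mod_cast hh.ne'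
  letI : MeasureSpace ℂ := ⟨gaussC (h/2)⟩
  haveI : IsProbabilityMeasure (volume : Measure ℂ) := gaussC_prob (h/2)
  have hmeas : gaussCn n (h/2) = (volume : Measure (Fin n → ℂ)) := rfl
  rw [hmeas]
  set f : Fin n → ℂ → ℂ := fun j w => Complex.exp (-(1/(h:ℂ)) * ((Z j + w - Y j)
    * ((starRingEnd ℂ) (Z j) + (starRingEnd ℂ) w - (starRingEnd ℂ) (X j)))) with hfdef
  have key : ∀ W : Fin n → ℂ, bealsKer n h X Y (Z + W)
      = Complex.exp (-(1/(2*(h:ℂ))) * ∑ j, (X j - Y j) * (starRingEnd ℂ) (X j - Y j))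
          * ∏ j, f j (W j) := by
    intro W
    rw [bealsKer]
    simp only [hfdef]
    rw [← Complex.exp_sum, ← Complex.exp_add]
    congr 1
    simp only [Pi.add_apply, map_add, Finset.mul_sum, sub_eq_add_neg,
      ← Finset.sum_neg_distrib, ← Finset.sum_add_distrib]
    exact Finset.sum_congr rfl fun j _ => by ring
  simp_rw [key]
  rw [integral_const_mul]
  rw [MeasureTheory.integral_fintype_prod_volume_eq_prod f]
  have hco : ∀ j, (∫ w, f j w) = (1/2 : ℂ) * Complex.exp (-(1/(2*(h:ℂ)))
      * ((Z j - Y j) * ((starRingEnd ℂ) (Z j) - (starRingEnd ℂ) (X j)))) :=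
    fun j => coord h hh (X j) (Y j) (Z j)
  rw [Finset.prod_congr rfl fun j _ => hco j]
  rw [Finset.prod_mul_distrib, Finset.prod_const, Finset.card_univ, Fintype.card_fin,
    ← Complex.exp_sum]
  rw [show ((1:ℂ)/2)^n = (2:ℂ)^(-(n:ℤ)) by
    rw [one_div, inv_pow, ← zpow_natCast (2:ℂ) n, ← zpow_neg]]
  rw [mul_assoc, ← Complex.exp_add,
    mul_left_comm (Complex.exp _) ((2:ℂ)^(-(n:ℤ))) (Complex.exp _), ← Complex.exp_add]
  congr 2
  simp only [map_sub, Finset.mul_sum, ← Finset.sum_add_distrib, ← Finset.sum_sub_distrib,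
    neg_div, Finset.sum_div, ← Finset.sum_neg_distrib]
  exact Finset.sum_congr rfl fun j _ => by ring
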